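/- Suppose X and Y are complex-valued random variables with |X| ≤ 1 and |Y| ≤ 1 almost surely, and let Ẋ = X - E[X], Ẏ = Y - E[Y]. Then Var(ẊẎ) ≤ 4 σ_X σ_Y. -/

import Mathlib

open MeasureTheory

lemma aux_var_le_moment {Ω : Type*} [MeasureSpace Ω]
    [IsProbabilityMeasure (volume : Measure Ω)] (Z : Ω → ℂ)
    (hmeas : AEStronglyMeasurable Z volume) (hbd : ∀ᵐ ω, ‖Z ω‖ ≤ 4) :
    ∫ ω, ‖Z ω - ∫ ω', Z ω'‖ ^ 2 ≤ ∫ ω, ‖Z ω‖ ^ 2 := by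
  set m : ℂ := ∫ ω', Z ω' with hm
  have hZint : Integrable Z := (integrable_const (4:ℝ)).mono' hmeas hbd
  have hsqint : Integrable (fun ω => ‖Z ω‖ ^ 2) := by
    refine (integrable_const (16:ℝ)).mono' ?_ ?_
    · exact (hmeas.norm.pow 2)
    · filter_upwards [hbd] with ω h
      have h0 := norm_nonneg (Z ω)
      rw [Real.norm_of_nonneg (by positivity)]
      nlinarith
  have hmulint : Integrable (fun ω => (Z ω * (starRingEnd ℂ) m).re) := by
    exact (hZint.mul_const _).re
  have h1 : ∀ z : ℂ, ‖z‖ ^ 2 = Complex.normSq z := fun z => by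
    rw [Complex.sq_norm]
  have hpt : ∀ ω, ‖Z ω - m‖ ^ 2
      = ‖Z ω‖ ^ 2 - 2 * (Z ω * (starRingEnd ℂ) m).re + ‖m‖ ^ 2 := by
    intro ω
    rw [h1, h1, h1, Complex.normSq_sub]
    ring
  calc ∫ ω, ‖Z ω - m‖ ^ 2
      = ∫ ω, (‖Z ω‖ ^ 2 - 2 * (Z ω * (starRingEnd ℂ) m).re + ‖m‖ ^ 2) := by
        exact integral_congr_ae (Filter.Eventually.of_forall hpt)
    _ = (∫ ω, (‖Z ω‖ ^ 2 - 2 * (Z ω * (starRingEnd ℂ) m).re)) + ∫ (_ : Ω), ‖m‖ ^ 2 := by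
        have hi1 : Integrable (fun ω => ‖Z ω‖ ^ 2 - 2 * (Z ω * (starRingEnd ℂ) m).re) :=
          hsqint.sub (hmulint.const_mul 2)
        rw [integral_add hi1 (integrable_const _)]
    _ = (∫ ω, ‖Z ω‖ ^ 2) - 2 * (∫ ω, (Z ω * (starRingEnd ℂ) m).re) + ‖m‖ ^ 2 := by
        rw [integral_sub hsqint (hmulint.const_mul 2), integral_const_mul, integral_const]
        simp only [probReal_univ, measure_univ, ENNReal.toReal_one, smul_eq_mul, one_mul]
    _ = (∫ ω, ‖Z ω‖ ^ 2) - 2 * ‖m‖ ^ 2 + ‖m‖ ^ 2 := by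
        have h2 : ∫ ω, (Z ω * (starRingEnd ℂ) m).re = ((∫ ω, Z ω * (starRingEnd ℂ) m)).re := by
          simpa [RCLike.re_to_complex] using integral_re (𝕜 := ℂ) (hZint.mul_const ((starRingEnd ℂ) m))
        rw [h2, integral_mul_const, Complex.mul_conj]
        simp only [Complex.ofReal_re, h1]
        rfl
    _ ≤ ∫ ω, ‖Z ω‖ ^ 2 := by nlinarith [sq_nonneg ‖m‖]

theorem stmt_4 {Ω : Type*} [MeasureSpace Ω] [IsProbabilityMeasure (volume : Measure Ω)]
    (X Y : Ω → ℂ)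
    (hXmeas : AEMeasurable X) (hYmeas : AEMeasurable Y)
    (hXbd : ∀ᵐ ω, ‖X ω‖ ≤ 1) (hYbd : ∀ᵐ ω, ‖Y ω‖ ≤ 1) :
    (∫ ω, ‖(X ω - ∫ ω', X ω') * (Y ω - ∫ ω', Y ω')
        - ∫ ω'', (X ω'' - ∫ ω', X ω') * (Y ω'' - ∫ ω', Y ω')‖ ^ 2) ≤
      4 * Real.sqrt (∫ ω, ‖X ω - ∫ ω', X ω'‖ ^ 2) *
        Real.sqrt (∫ ω, ‖Y ω - ∫ ω', Y ω'‖ ^ 2) := by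
  set mX : ℂ := ∫ ω', X ω' with hmX
  set mY : ℂ := ∫ ω', Y ω' with hmY
  have hmXbd : ‖mX‖ ≤ 1 := by
    have := norm_integral_le_of_norm_le_const (μ := (volume : Measure Ω)) hXbd
    simpa using this
  have hmYbd : ‖mY‖ ≤ 1 := by
    have := norm_integral_le_of_norm_le_const (μ := (volume : Measure Ω)) hYbd
    simpa using this
  set Xd : Ω → ℂ := fun ω => X ω - mX with hXd
  set Yd : Ω → ℂ := fun ω => Y ω - mY with hYd
  have hXdmeas : AEStronglyMeasurable Xd volume :=
    (hXmeas.sub aemeasurable_const).aestronglyMeasurable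
  have hYdmeas : AEStronglyMeasurable Yd volume :=
    (hYmeas.sub aemeasurable_const).aestronglyMeasurable
  have hXdbd : ∀ᵐ ω, ‖Xd ω‖ ≤ 2 := by
    filter_upwards [hXbd] with ω h
    calc ‖X ω - mX‖ ≤ ‖X ω‖ + ‖mX‖ := norm_sub_le _ _
      _ ≤ 2 := by linarith
  have hYdbd : ∀ᵐ ω, ‖Yd ω‖ ≤ 2 := by
    filter_upwards [hYbd] with ω h
    calc ‖Y ω - mY‖ ≤ ‖Y ω‖ + ‖mY‖ := norm_sub_le _ _
      _ ≤ 2 := by linarith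
  set Z : Ω → ℂ := fun ω => Xd ω * Yd ω with hZ
  have hZmeas : AEStronglyMeasurable Z volume := hXdmeas.mul hYdmeas
  have hZbd : ∀ᵐ ω, ‖Z ω‖ ≤ 4 := by
    filter_upwards [hXdbd, hYdbd] with ω h1 h2
    rw [hZ]
    simp only [norm_mul]
    nlinarith [norm_nonneg (Xd ω), norm_nonneg (Yd ω)]
  have key1 : (∫ ω, ‖Z ω - ∫ ω', Z ω'‖ ^ 2) ≤ ∫ ω, ‖Z ω‖ ^ 2 :=
    aux_var_le_moment Z hZmeas hZbd
  -- second moment bound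
  have hXn2 : MemLp (fun ω => ‖Xd ω‖) (ENNReal.ofReal 2) volume :=
    MemLp.of_bound hXdmeas.norm 2 (by filter_upwards [hXdbd] with ω h; simpa using h)
  have hYn2 : MemLp (fun ω => ‖Yd ω‖) (ENNReal.ofReal 2) volume :=
    MemLp.of_bound hYdmeas.norm 2 (by filter_upwards [hYdbd] with ω h; simpa using h)
  have hCS : (∫ ω, ‖Xd ω‖ * ‖Yd ω‖) ≤
      (∫ ω, ‖Xd ω‖ ^ (2:ℝ)) ^ ((1:ℝ)/2) * (∫ ω, ‖Yd ω‖ ^ (2:ℝ)) ^ ((1:ℝ)/2) :=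
    integral_mul_le_Lp_mul_Lq_of_nonneg (Real.holderConjugate_iff_eq_conjExponent (by norm_num) |>.mpr (by norm_num))
      (Filter.Eventually.of_forall fun ω => norm_nonneg _)
      (Filter.Eventually.of_forall fun ω => norm_nonneg _) hXn2 hYn2
  have hprodint : Integrable (fun ω => ‖Xd ω‖ * ‖Yd ω‖) := by
    refine (integrable_const (4:ℝ)).mono' (hXdmeas.norm.mul hYdmeas.norm) ?_
    filter_upwards [hXdbd, hYdbd] with ω h1 h2
    rw [Real.norm_of_nonneg (by positivity)]
    nlinarith [norm_nonneg (Xd ω), norm_nonneg (Yd ω)]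
  have hsqint : Integrable (fun ω => ‖Z ω‖ ^ 2) := by
    refine (integrable_const (16:ℝ)).mono' (hZmeas.norm.pow 2) ?_
    filter_upwards [hZbd] with ω h
    rw [Real.norm_of_nonneg (by positivity)]
    nlinarith [norm_nonneg (Z ω)]
  have key2 : (∫ ω, ‖Z ω‖ ^ 2) ≤ 4 * ∫ ω, ‖Xd ω‖ * ‖Yd ω‖ := by
    rw [← integral_const_mul]
    refine integral_mono_ae hsqint (hprodint.const_mul 4) ?_
    filter_upwards [hXdbd, hYdbd] with ω h1 h2
    rw [hZ]
    simp only [norm_mul]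
    have h0 : 0 ≤ ‖Xd ω‖ * ‖Yd ω‖ := by positivity
    have h4 : ‖Xd ω‖ * ‖Yd ω‖ ≤ 4 := by nlinarith [norm_nonneg (Xd ω), norm_nonneg (Yd ω)]
    nlinarith [mul_nonneg h0 (sub_nonneg.mpr h4)]
  have hsq : ∀ (f : Ω → ℂ), (∫ ω, ‖f ω‖ ^ (2:ℝ)) = ∫ ω, ‖f ω‖ ^ 2 := by
    intro f
    refine integral_congr_ae (Filter.Eventually.of_forall fun ω => ?_)
    show ‖f ω‖ ^ (2:ℝ) = ‖f ω‖ ^ (2:ℕ)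
    rw [← Real.rpow_natCast ‖f ω‖ 2]
    norm_num
  have hrw : ∀ (f : Ω → ℂ), (∫ ω, ‖f ω‖ ^ (2:ℝ)) ^ ((1:ℝ)/2) = Real.sqrt (∫ ω, ‖f ω‖ ^ 2) := by
    intro f
    rw [hsq, ← Real.sqrt_eq_rpow]
  rw [hrw, hrw] at hCS
  calc (∫ ω, ‖Z ω - ∫ ω', Z ω'‖ ^ 2) ≤ ∫ ω, ‖Z ω‖ ^ 2 := key1
    _ ≤ 4 * ∫ ω, ‖Xd ω‖ * ‖Yd ω‖ := key2
    _ ≤ 4 * (Real.sqrt (∫ ω, ‖Xd ω‖ ^ 2) * Real.sqrt (∫ ω, ‖Yd ω‖ ^ 2)) := by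
        linarith
    _ = 4 * Real.sqrt (∫ ω, ‖Xd ω‖ ^ 2) * Real.sqrt (∫ ω, ‖Yd ω‖ ^ 2) := by ring
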